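/- Let α, β be distinct nonzero complex numbers, q = αβ, U_n = (α^n - β^n)/(α-β), V_n = α^n + β^n, and fix k with U_k ≠ 0 and V_k^2 - 4q^k ≠ 0. Then for all j ≥ 2, Σ_{j_1 + j_2 = j} U_{k j_1} U_{k j_2} = (U_k / (V_k^2 - 4 q^k)) * ((j-1) * V_k * U_{kj} - 2j * q^k * U_{k(j-1)}). -/

import Mathlib

set_option maxHeartbeats 1000000

private lemma self_convolution_two_aux (a b c : ℂ) (m : ℕ)
    (hab : a - b ≠ 0) (hc : c ≠ 0) :
    (((m : ℂ) + 3) * (a ^ (m + 2) + b ^ (m + 2)) - (a ^ (m + 3) - b ^ (m + 3)) / (a - b)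
        - (b ^ (m + 3) - a ^ (m + 3)) / (b - a)) / c ^ 2 =
      (a - b) / c / ((a + b) ^ 2 - 4 * (a * b)) *
        (((m : ℂ) + 2 - 1) * (a + b) * ((a ^ (m + 2) - b ^ (m + 2)) / c)
          - 2 * ((m : ℂ) + 2) * (a * b) * ((a ^ (m + 1) - b ^ (m + 1)) / c)) := by
  have hba : b - a ≠ 0 := fun h => hab (by linear_combination -h)
  have hD : (a + b) ^ 2 - 4 * (a * b) ≠ 0 := by
    intro h
    exact hab (by
      have : (a - b) ^ 2 = 0 := by linear_combination h
      exact pow_eq_zero_iff (n := 2) (by norm_num) |>.mp this)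
  rw [show (a + b) ^ 2 - 4 * (a * b) = (a - b) ^ 2 by ring]
  field_simp
  ring


theorem self_convolution_two (α β : ℂ) (hαβ : α ≠ β) (hα : α ≠ 0) (hβ : β ≠ 0)
    (q : ℂ) (hq : q = α * β)
    (U V : ℕ → ℂ)
    (hU : ∀ n, U n = (α ^ n - β ^ n) / (α - β))
    (hV : ∀ n, V n = α ^ n + β ^ n)
    (k : ℕ) (hUk : U k ≠ 0) (hD : (V k) ^ 2 - 4 * q ^ k ≠ 0) :
    ∀ j : ℕ, 2 ≤ j →
      ∑ p ∈ Finset.HasAntidiagonal.antidiagonal j, U (k * p.1) * U (k * p.2) =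
        (U k / ((V k) ^ 2 - 4 * q ^ k)) *
          (((j : ℂ) - 1) * V k * U (k * j) - 2 * (j : ℂ) * q ^ k * U (k * (j - 1))) := by
  intro j hj
  obtain ⟨m, rfl⟩ : ∃ m, j = m + 2 := ⟨j - 2, by omega⟩
  set a := α ^ k with ha
  set b := β ^ k with hb
  have hab : α - β ≠ 0 := sub_ne_zero.mpr hαβ
  have hUkval : U k = (a - b) / (α - β) := hU k
  have hab2 : a - b ≠ 0 := by
    intro h
    apply hUk
    rw [hUkval, h, zero_div]
  have hVk : V k = a + b := hV k
  have hqk : q ^ k = a * b := by rw [hq, mul_pow]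
  have hD' : (V k) ^ 2 - 4 * q ^ k = (a - b) ^ 2 := by
    rw [hVk, hqk]; ring
  have key1 : (∑ i ∈ Finset.range (m + 3), a ^ i * b ^ (m + 2 - i)) * (a - b)
      = a ^ (m + 3) - b ^ (m + 3) := by
    have := geom_sum₂_mul a b (m + 3)
    simpa using this
  have key2 : (∑ i ∈ Finset.range (m + 3), b ^ i * a ^ (m + 2 - i)) * (b - a)
      = b ^ (m + 3) - a ^ (m + 3) := by
    have := geom_sum₂_mul b a (m + 3)
    simpa using this
  rw [Finset.Nat.sum_antidiagonal_eq_sum_range_succ_mk]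
  have expand : ∀ i ∈ Finset.range (m + 3),
      U (k * i) * U (k * (m + 2 - i)) =
        (a ^ (m + 2) + b ^ (m + 2) - a ^ i * b ^ (m + 2 - i)
          - b ^ i * a ^ (m + 2 - i)) / (α - β) ^ 2 := by
    intro i hi
    rw [Finset.mem_range] at hi
    have h1 : a ^ i * a ^ (m + 2 - i) = a ^ (m + 2) := by
      rw [← pow_add]; congr 1; omega
    have h2 : b ^ i * b ^ (m + 2 - i) = b ^ (m + 2) := by
      rw [← pow_add]; congr 1; omega
    rw [hU, hU, pow_mul, pow_mul, pow_mul, pow_mul, ← ha, ← hb,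
      div_mul_div_comm, ← sq]
    congr 1
    rw [sub_mul, mul_sub, mul_sub, h1, h2]; ring
  rw [Finset.sum_congr rfl expand, ← Finset.sum_div]
  have hsplit : ∑ i ∈ Finset.range (m + 3),
      (a ^ (m + 2) + b ^ (m + 2) - a ^ i * b ^ (m + 2 - i)
        - b ^ i * a ^ (m + 2 - i)) =
      (m + 3 : ℂ) * (a ^ (m + 2) + b ^ (m + 2))
        - (∑ i ∈ Finset.range (m + 3), a ^ i * b ^ (m + 2 - i))
        - (∑ i ∈ Finset.range (m + 3), b ^ i * a ^ (m + 2 - i)) := by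
    rw [Finset.sum_sub_distrib, Finset.sum_sub_distrib, Finset.sum_const,
      Finset.card_range]
    push_cast
    ring
  rw [hsplit]
  have hS : (∑ i ∈ Finset.range (m + 3), a ^ i * b ^ (m + 2 - i))
      = (a ^ (m + 3) - b ^ (m + 3)) / (a - b) := by
    field_simp
    exact key1
  have hT : (∑ i ∈ Finset.range (m + 3), b ^ i * a ^ (m + 2 - i))
      = (b ^ (m + 3) - a ^ (m + 3)) / (b - a) := by
    have hba : b - a ≠ 0 := fun h => hab2 (by linear_combination -h)
    field_simp
    exact key2
  have hsub : m + 2 - 1 = m + 1 := rfl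
  rw [hS, hT, hUkval, hU (k * (m + 2)), hU (k * (m + 2 - 1)),
    hsub, pow_mul, pow_mul, pow_mul, pow_mul, ← ha, ← hb]
  rw [hVk, hqk]
  push_cast
  exact self_convolution_two_aux a b (α - β) m hab2 hab
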